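/- Let a < b, α > 0, λ ≥ 0, and u, v ∈ L₂(a,b). Then both integrals below are finite and ∫_a^b (I_{a+}^{α,λ} u)(x) · v(x) dx = ∫_a^b u(x) · (I_{b−}^{α,λ} v)(x) dx. (Paper's Lemma 2.2.8: the left and right tempered fractional integrals are adjoint to each other in L₂(a,b).) -/

import Mathlib

open MeasureTheory Set
open scoped ENNReal NNReal

/-- The left tempered fractional integral
`(I_{a+}^{α,λ} f)(x) = (1/Γ(α)) ∫_a^x e^{−λ(x−s)} (x−s)^{α−1} f(s) ds`. -/
noncomputable def TIl (a α lam : ℝ) (f : ℝ → ℝ) (x : ℝ) : ℝ :=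
  (1 / Real.Gamma α) * ∫ s in a..x, Real.exp (-(lam * (x - s))) * (x - s) ^ (α - 1) * f s

/-- The right tempered fractional integral
`(I_{b−}^{α,λ} f)(x) = (1/Γ(α)) ∫_x^b e^{λ(x−s)} (s−x)^{α−1} f(s) ds`. -/
noncomputable def TIr (b α lam : ℝ) (f : ℝ → ℝ) (x : ℝ) : ℝ :=
  (1 / Real.Gamma α) * ∫ s in x..b, Real.exp (lam * (x - s)) * (s - x) ^ (α - 1) * f s

lemma aux_lint_left (α : ℝ) (hα : 0 < α) (c L : ℝ) (hL : 0 ≤ L) :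
    ∫⁻ x in Ioo c (c + L), ENNReal.ofReal ((x - c) ^ (α - 1)) = ENNReal.ofReal (L ^ α / α) := by
  have h1 : IntervalIntegrable (fun t : ℝ => t ^ (α - 1)) volume 0 L :=
    intervalIntegral.intervalIntegrable_rpow' (by linarith)
  have h2 : IntervalIntegrable (fun x : ℝ => (x - c) ^ (α - 1)) volume c (c + L) := by
    simpa [add_comm] using h1.comp_sub_right c
  have h3 : IntegrableOn (fun x : ℝ => (x - c) ^ (α - 1)) (Ioo c (c + L)) volume :=
    ((intervalIntegrable_iff_integrableOn_Ioc_of_le (by linarith)).mp h2).mono_set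
      Ioo_subset_Ioc_self
  have hnn : 0 ≤ᵐ[volume.restrict (Ioo c (c + L))] fun x : ℝ => (x - c) ^ (α - 1) := by
    filter_upwards [ae_restrict_mem measurableSet_Ioo] with x hx
    exact Real.rpow_nonneg (by linarith [hx.1]) _
  rw [← ofReal_integral_eq_lintegral_ofReal h3 hnn]
  congr 1
  rw [← integral_Ioc_eq_integral_Ioo, ← intervalIntegral.integral_of_le (by linarith)]
  rw [intervalIntegral.integral_comp_sub_right (fun t : ℝ => t ^ (α - 1)) c]
  rw [show c - c = (0:ℝ) by ring, show c + L - c = L by ring]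
  rw [integral_rpow (Or.inl (by linarith))]
  rw [show α - 1 + 1 = α by ring, Real.zero_rpow hα.ne', sub_zero]

lemma aux_lint_right (α : ℝ) (hα : 0 < α) (d L : ℝ) (hL : 0 ≤ L) :
    ∫⁻ s in Ioo (d - L) d, ENNReal.ofReal ((d - s) ^ (α - 1)) = ENNReal.ofReal (L ^ α / α) := by
  have h1 : IntervalIntegrable (fun t : ℝ => t ^ (α - 1)) volume 0 L :=
    intervalIntegral.intervalIntegrable_rpow' (by linarith)
  have h2 : IntervalIntegrable (fun s : ℝ => (d - s) ^ (α - 1)) volume (d - L) d := by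
    simpa using (h1.comp_sub_left d).symm
  have h3 : IntegrableOn (fun s : ℝ => (d - s) ^ (α - 1)) (Ioo (d - L) d) volume :=
    ((intervalIntegrable_iff_integrableOn_Ioc_of_le (by linarith)).mp h2).mono_set
      Ioo_subset_Ioc_self
  have hnn : 0 ≤ᵐ[volume.restrict (Ioo (d - L) d)] fun s : ℝ => (d - s) ^ (α - 1) := by
    filter_upwards [ae_restrict_mem measurableSet_Ioo] with s hs
    exact Real.rpow_nonneg (by linarith [hs.2]) _
  rw [← ofReal_integral_eq_lintegral_ofReal h3 hnn]
  congr 1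
  rw [← integral_Ioc_eq_integral_Ioo, ← intervalIntegral.integral_of_le (by linarith)]
  rw [intervalIntegral.integral_comp_sub_left (fun t : ℝ => t ^ (α - 1)) d]
  rw [show d - d = (0:ℝ) by ring, show d - (d - L) = L by ring]
  rw [integral_rpow (Or.inl (by linarith))]
  rw [show α - 1 + 1 = α by ring, Real.zero_rpow hα.ne', sub_zero]

lemma aux_mul_le_sq_add_sq (A B : ℝ≥0∞) : A * B ≤ A ^ 2 + B ^ 2 := by
  rcases le_total A B with h | h
  · calc A * B ≤ B * B := mul_le_mul_left h _
    _ = B ^ 2 := (sq B).symm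
    _ ≤ A ^ 2 + B ^ 2 := le_add_self
  · calc A * B ≤ A * A := mul_le_mul_right h _
    _ = A ^ 2 := (sq A).symm
    _ ≤ A ^ 2 + B ^ 2 := le_self_add

lemma aux_sq_lintegral_lt_top {μ : Measure ℝ} {f : ℝ → ℝ} (hf : MeasureTheory.MemLp f 2 μ) :
    ∫⁻ x, ((‖f x‖₊ : ℝ≥0∞)) ^ 2 ∂μ < ⊤ := by
  have h := hf.2
  rw [eLpNorm_eq_lintegral_rpow_enorm_toReal two_ne_zero ENNReal.ofNat_ne_top] at h
  rw [ENNReal.rpow_lt_top_iff_of_pos (by norm_num : (0:ℝ) < 1 / (2:ℝ≥0∞).toReal)] at h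
  have : ∀ x, ((‖f x‖₊ : ℝ≥0∞)) ^ ((2:ℝ≥0∞).toReal) = ((‖f x‖₊ : ℝ≥0∞)) ^ (2:ℕ) := by
    intro x
    rw [show ((2:ℝ≥0∞)).toReal = ((2:ℕ):ℝ) by simp, ENNReal.rpow_natCast]
  simp [this] at h
  exact h

/-- Paper's Lemma 2.2.8: the left and right tempered fractional integrals are adjoint in
`L₂(a,b)`: for `u, v ∈ L₂(a,b)`, both integrals are finite and
`∫_a^b (I_{a+}^{α,λ}u) v = ∫_a^b u (I_{b−}^{α,λ}v)`. -/
theorem stmt_7 (a b α lam : ℝ) (hab : a < b) (hα : 0 < α) (hlam : 0 ≤ lam)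
    (u v : ℝ → ℝ)
    (hu : MemLp u 2 (volume.restrict (Ioo a b)))
    (hv : MemLp v 2 (volume.restrict (Ioo a b))) :
    IntegrableOn (fun x => TIl a α lam u x * v x) (Ioo a b) ∧
    IntegrableOn (fun x => u x * TIr b α lam v x) (Ioo a b) ∧
    ∫ x in Ioo a b, TIl a α lam u x * v x = ∫ x in Ioo a b, u x * TIr b α lam v x := by
  classical
  set μ : Measure ℝ := volume.restrict (Ioo a b) with hμ
  set π : Measure (ℝ × ℝ) := μ.prod μ with hπ
  -- the (real-valued) kernel
  set g : ℝ × ℝ → ℝ := fun p =>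
    if p.2 < p.1 then Real.exp (-(lam * (p.1 - p.2))) * (p.1 - p.2) ^ (α - 1) else 0 with hg
  have hg_nonneg : ∀ p, 0 ≤ g p := by
    intro p
    simp only [hg]
    split
    · exact mul_nonneg (Real.exp_nonneg _) (Real.rpow_nonneg (by linarith [‹p.2 < p.1›]) _)
    · exact le_rfl
  have hg_meas : Measurable g := by
    apply Measurable.ite (measurableSet_lt measurable_snd measurable_fst)
    · exact (((measurable_fst.sub measurable_snd).const_mul lam).neg.exp).mul
        (by measurability)
    · exact measurable_const
  have hg_le : ∀ p : ℝ × ℝ, p.2 < p.1 → g p ≤ (p.1 - p.2) ^ (α - 1) := by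
    intro p hp
    simp only [hg, if_pos hp]
    have h1 : Real.exp (-(lam * (p.1 - p.2))) ≤ 1 := by
      rw [Real.exp_le_one_iff]
      have : 0 ≤ lam * (p.1 - p.2) := mul_nonneg hlam (by linarith)
      linarith
    calc Real.exp (-(lam * (p.1 - p.2))) * (p.1 - p.2) ^ (α - 1)
        ≤ 1 * (p.1 - p.2) ^ (α - 1) :=
          mul_le_mul_of_nonneg_right h1 (Real.rpow_nonneg (by linarith) _)
    _ = (p.1 - p.2) ^ (α - 1) := one_mul _
  -- ennreal kernel
  set e : ℝ × ℝ → ℝ≥0∞ := fun p => ENNReal.ofReal (g p) with he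
  have he_meas : Measurable e := ENNReal.measurable_ofReal.comp hg_meas
  set C : ℝ≥0∞ := ENNReal.ofReal ((b - a) ^ α / α) with hC
  have hC_ne_top : C ≠ ⊤ := ENNReal.ofReal_ne_top
  have hba : (0:ℝ) ≤ b - a := by linarith
  -- kernel marginal bounds
  have hI1 : ∀ s : ℝ, a ≤ s → ∫⁻ x in Ioo a b, e (x, s) ≤ C := by
    intro s hs
    have hsub : ∀ x : ℝ, x ∈ Ioo a b →
        e (x, s) ≤ (Ioo s (s + (b - a))).indicator
          (fun x => ENNReal.ofReal ((x - s) ^ (α - 1))) x := by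
      intro x hx
      by_cases h : s < x
      · have hxmem : x ∈ Ioo s (s + (b - a)) := ⟨h, by linarith [hx.2]⟩
        rw [indicator_of_mem hxmem]
        exact ENNReal.ofReal_le_ofReal (hg_le (x, s) h)
      · have : g (x, s) = 0 := by simp only [hg, if_neg h]
        simp [he, this]
    calc ∫⁻ x in Ioo a b, e (x, s)
        ≤ ∫⁻ x in Ioo a b, (Ioo s (s + (b - a))).indicator
            (fun x => ENNReal.ofReal ((x - s) ^ (α - 1))) x := by
          refine lintegral_mono_ae ?_
          filter_upwards [ae_restrict_mem measurableSet_Ioo] with x hx using hsub x hx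
    _ = ∫⁻ x in Ioo s (s + (b - a)) ∩ Ioo a b,
          ENNReal.ofReal ((x - s) ^ (α - 1)) := by
          rw [lintegral_indicator measurableSet_Ioo, Measure.restrict_restrict measurableSet_Ioo]
    _ ≤ ∫⁻ x in Ioo s (s + (b - a)), ENNReal.ofReal ((x - s) ^ (α - 1)) :=
          lintegral_mono_set inter_subset_left
    _ = C := by rw [aux_lint_left α hα s (b - a) hba, hC]
  have hI2 : ∀ x : ℝ, x ≤ b → ∫⁻ s in Ioo a b, e (x, s) ≤ C := by
    intro x hx
    have hsub : ∀ s : ℝ, s ∈ Ioo a b →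
        e (x, s) ≤ (Ioo (x - (b - a)) x).indicator
          (fun s => ENNReal.ofReal ((x - s) ^ (α - 1))) s := by
      intro s hs
      by_cases h : s < x
      · have hsmem : s ∈ Ioo (x - (b - a)) x := ⟨by linarith [hs.1], h⟩
        rw [indicator_of_mem hsmem]
        exact ENNReal.ofReal_le_ofReal (hg_le (x, s) h)
      · have : g (x, s) = 0 := by simp only [hg, if_neg h]
        simp [he, this]
    calc ∫⁻ s in Ioo a b, e (x, s)
        ≤ ∫⁻ s in Ioo a b, (Ioo (x - (b - a)) x).indicator
            (fun s => ENNReal.ofReal ((x - s) ^ (α - 1))) s := by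
          refine lintegral_mono_ae ?_
          filter_upwards [ae_restrict_mem measurableSet_Ioo] with s hs using hsub s hs
    _ = ∫⁻ s in Ioo (x - (b - a)) x ∩ Ioo a b,
          ENNReal.ofReal ((x - s) ^ (α - 1)) := by
          rw [lintegral_indicator measurableSet_Ioo, Measure.restrict_restrict measurableSet_Ioo]
    _ ≤ ∫⁻ s in Ioo (x - (b - a)) x, ENNReal.ofReal ((x - s) ^ (α - 1)) :=
          lintegral_mono_set inter_subset_left
    _ = C := aux_lint_right α hα x (b - a) hba
  -- square-integrability data
  have hU : ∫⁻ s, ((‖u s‖₊ : ℝ≥0∞)) ^ 2 ∂μ < ⊤ := aux_sq_lintegral_lt_top hu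
  have hV : ∫⁻ x, ((‖v x‖₊ : ℝ≥0∞)) ^ 2 ∂μ < ⊤ := aux_sq_lintegral_lt_top hv
  have hu_ae : AEMeasurable (fun s => ((‖u s‖₊ : ℝ≥0∞)) ^ 2) μ := hu.1.enorm.pow_const 2
  have hv_ae : AEMeasurable (fun x => ((‖v x‖₊ : ℝ≥0∞)) ^ 2) μ := hv.1.enorm.pow_const 2
  have qmp_fst : Measure.QuasiMeasurePreserving (Prod.fst : ℝ × ℝ → ℝ) π μ :=
    Measure.quasiMeasurePreserving_fst
  have qmp_snd : Measure.QuasiMeasurePreserving (Prod.snd : ℝ × ℝ → ℝ) π μ :=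
    Measure.quasiMeasurePreserving_snd
  -- the big integrand
  set F : ℝ × ℝ → ℝ := fun p => g p * u p.2 * v p.1 with hF
  have hF_meas : AEStronglyMeasurable F π := by
    exact ((hg_meas.stronglyMeasurable.aestronglyMeasurable.mul
      (hu.1.comp_quasiMeasurePreserving qmp_snd)).mul
      (hv.1.comp_quasiMeasurePreserving qmp_fst))
  -- finiteness of the double integral
  have hF_int : Integrable F π := by
    refine ⟨hF_meas, ?_⟩
    have key : ∀ p : ℝ × ℝ, ((‖F p‖₊ : ℝ≥0∞)) ≤
        e p * ((‖u p.2‖₊ : ℝ≥0∞) ^ 2) + e p * ((‖v p.1‖₊ : ℝ≥0∞) ^ 2) := by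
      intro p
      have h1 : ((‖F p‖₊ : ℝ≥0∞)) =
          e p * ((‖u p.2‖₊ : ℝ≥0∞) * (‖v p.1‖₊ : ℝ≥0∞)) := by
        simp only [hF, nnnorm_mul, ENNReal.coe_mul, he]
        rw [← Real.enorm_eq_ofReal (hg_nonneg p), mul_assoc]
        rfl
      rw [h1, ← mul_add]
      exact mul_le_mul_right (aux_mul_le_sq_add_sq _ _) _
    have hA_meas : AEMeasurable (fun p : ℝ × ℝ => e p * ((‖u p.2‖₊ : ℝ≥0∞) ^ 2)) π :=
      he_meas.aemeasurable.mul (hu_ae.comp_quasiMeasurePreserving qmp_snd)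
    have hB_meas : AEMeasurable (fun p : ℝ × ℝ => e p * ((‖v p.1‖₊ : ℝ≥0∞) ^ 2)) π :=
      he_meas.aemeasurable.mul (hv_ae.comp_quasiMeasurePreserving qmp_fst)
    have hA : ∫⁻ p, e p * ((‖u p.2‖₊ : ℝ≥0∞) ^ 2) ∂π ≤ C * ∫⁻ s, ((‖u s‖₊ : ℝ≥0∞)) ^ 2 ∂μ := by
      rw [hπ, lintegral_prod_symm _ hA_meas]
      calc ∫⁻ s, (∫⁻ x, e (x, s) * ((‖u s‖₊ : ℝ≥0∞) ^ 2) ∂μ) ∂μ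
          = ∫⁻ s, (∫⁻ x, e (x, s) ∂μ) * ((‖u s‖₊ : ℝ≥0∞) ^ 2) ∂μ := by
            refine lintegral_congr fun s => ?_
            exact lintegral_mul_const' _ _ (by simp)
      _ ≤ ∫⁻ s, C * ((‖u s‖₊ : ℝ≥0∞) ^ 2) ∂μ := by
            refine lintegral_mono_ae ?_
            filter_upwards [ae_restrict_mem measurableSet_Ioo] with s hs
            exact mul_le_mul_left (hI1 s hs.1.le) _
      _ = C * ∫⁻ s, ((‖u s‖₊ : ℝ≥0∞)) ^ 2 ∂μ := lintegral_const_mul' _ _ hC_ne_top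
    have hB : ∫⁻ p, e p * ((‖v p.1‖₊ : ℝ≥0∞) ^ 2) ∂π ≤ C * ∫⁻ x, ((‖v x‖₊ : ℝ≥0∞)) ^ 2 ∂μ := by
      rw [hπ, lintegral_prod _ hB_meas]
      calc ∫⁻ x, (∫⁻ s, e (x, s) * ((‖v x‖₊ : ℝ≥0∞) ^ 2) ∂μ) ∂μ
          = ∫⁻ x, (∫⁻ s, e (x, s) ∂μ) * ((‖v x‖₊ : ℝ≥0∞) ^ 2) ∂μ := by
            refine lintegral_congr fun x => ?_
            exact lintegral_mul_const' _ _ (by simp)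
      _ ≤ ∫⁻ x, C * ((‖v x‖₊ : ℝ≥0∞) ^ 2) ∂μ := by
            refine lintegral_mono_ae ?_
            filter_upwards [ae_restrict_mem measurableSet_Ioo] with x hx
            exact mul_le_mul_left (hI2 x hx.2.le) _
      _ = C * ∫⁻ x, ((‖v x‖₊ : ℝ≥0∞)) ^ 2 ∂μ := lintegral_const_mul' _ _ hC_ne_top
    have : ∫⁻ p, ((‖F p‖₊ : ℝ≥0∞)) ∂π ≤
        C * (∫⁻ s, ((‖u s‖₊ : ℝ≥0∞)) ^ 2 ∂μ) + C * (∫⁻ x, ((‖v x‖₊ : ℝ≥0∞)) ^ 2 ∂μ) := by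
      calc ∫⁻ p, ((‖F p‖₊ : ℝ≥0∞)) ∂π
          ≤ ∫⁻ p, (e p * ((‖u p.2‖₊ : ℝ≥0∞) ^ 2) + e p * ((‖v p.1‖₊ : ℝ≥0∞) ^ 2)) ∂π :=
            lintegral_mono key
      _ = (∫⁻ p, e p * ((‖u p.2‖₊ : ℝ≥0∞) ^ 2) ∂π) +
            ∫⁻ p, e p * ((‖v p.1‖₊ : ℝ≥0∞) ^ 2) ∂π := lintegral_add_left' hA_meas _
      _ ≤ _ := add_le_add hA hB
    exact lt_of_le_of_lt this (ENNReal.add_lt_top.mpr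
      ⟨ENNReal.mul_lt_top hC_ne_top.lt_top hU, ENNReal.mul_lt_top hC_ne_top.lt_top hV⟩)
  -- identify the two iterated integrals
  have hΓ : (1 : ℝ) / Real.Gamma α = 1 / Real.Gamma α := rfl
  have hLeq : ∀ x ∈ Ioo a b,
      (1 / Real.Gamma α) * ∫ s, F (x, s) ∂μ = TIl a α lam u x * v x := by
    intro x hx
    have h1 : ∫ s, F (x, s) ∂μ = (∫ s, g (x, s) * u s ∂μ) * v x := by
      rw [← integral_mul_const]
    have h2 : ∫ s, g (x, s) * u s ∂μ
        = ∫ s in Ioo a x, Real.exp (-(lam * (x - s))) * (x - s) ^ (α - 1) * u s := by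
      rw [hμ]
      calc ∫ s in Ioo a b, g (x, s) * u s
          = ∫ s in Ioo a b, (Ioo a x).indicator
              (fun s => Real.exp (-(lam * (x - s))) * (x - s) ^ (α - 1) * u s) s := by
            refine setIntegral_congr_fun measurableSet_Ioo fun s hs => ?_
            by_cases h : s < x
            · rw [indicator_of_mem (show s ∈ Ioo a x from ⟨hs.1, h⟩)]
              simp only [hg, if_pos h]
            · rw [indicator_of_notMem (fun hmem => h hmem.2)]
              simp only [hg, if_neg h, zero_mul]
      _ = ∫ s in Ioo a b ∩ Ioo a x,
            Real.exp (-(lam * (x - s))) * (x - s) ^ (α - 1) * u s :=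
            setIntegral_indicator measurableSet_Ioo
      _ = ∫ s in Ioo a x, Real.exp (-(lam * (x - s))) * (x - s) ^ (α - 1) * u s := by
            rw [Ioo_inter_Ioo, max_self, min_eq_right hx.2.le]
    rw [h1, h2, TIl]
    rw [intervalIntegral.integral_of_le hx.1.le, integral_Ioc_eq_integral_Ioo]
    ring
  have hReq : ∀ s ∈ Ioo a b,
      (1 / Real.Gamma α) * ∫ x, F (x, s) ∂μ = u s * TIr b α lam v s := by
    intro s hs
    have h1 : ∫ x, F (x, s) ∂μ = u s * ∫ x, g (x, s) * v x ∂μ := by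
      rw [← integral_const_mul]
      refine integral_congr_ae (Filter.Eventually.of_forall fun x => ?_)
      simp only [hF]; ring
    have h2 : ∫ x, g (x, s) * v x ∂μ
        = ∫ x in Ioo s b, Real.exp (-(lam * (x - s))) * (x - s) ^ (α - 1) * v x := by
      rw [hμ]
      calc ∫ x in Ioo a b, g (x, s) * v x
          = ∫ x in Ioo a b, (Ioo s b).indicator
              (fun x => Real.exp (-(lam * (x - s))) * (x - s) ^ (α - 1) * v x) x := by
            refine setIntegral_congr_fun measurableSet_Ioo fun x hx => ?_
            by_cases h : s < x
            · rw [indicator_of_mem (show x ∈ Ioo s b from ⟨h, hx.2⟩)]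
              simp only [hg, if_pos h]
            · rw [indicator_of_notMem (fun hmem => h hmem.1)]
              simp only [hg, if_neg h, zero_mul]
      _ = ∫ x in Ioo a b ∩ Ioo s b,
            Real.exp (-(lam * (x - s))) * (x - s) ^ (α - 1) * v x :=
            setIntegral_indicator measurableSet_Ioo
      _ = ∫ x in Ioo s b, Real.exp (-(lam * (x - s))) * (x - s) ^ (α - 1) * v x := by
            rw [Ioo_inter_Ioo, min_self, max_eq_right hs.1.le]
    have h3 : ∫ x in s..b, Real.exp (lam * (s - x)) * (x - s) ^ (α - 1) * v x
        = ∫ x in Ioo s b, Real.exp (-(lam * (x - s))) * (x - s) ^ (α - 1) * v x := by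
      rw [intervalIntegral.integral_of_le hs.2.le, integral_Ioc_eq_integral_Ioo]
      refine setIntegral_congr_fun measurableSet_Ioo fun x hx => ?_
      rw [show lam * (s - x) = -(lam * (x - s)) by ring]
    rw [h1, h2, TIr, ← h3]
    ring
  -- marginal integrabilities
  have hL_int : Integrable (fun x => (1 / Real.Gamma α) * ∫ s, F (x, s) ∂μ) μ :=
    (hF_int.integral_prod_left).const_mul _
  have hR_int : Integrable (fun s => (1 / Real.Gamma α) * ∫ x, F (x, s) ∂μ) μ :=
    (hF_int.integral_prod_right).const_mul _
  have hL_ae : (fun x => (1 / Real.Gamma α) * ∫ s, F (x, s) ∂μ)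
      =ᵐ[μ] fun x => TIl a α lam u x * v x := by
    filter_upwards [ae_restrict_mem measurableSet_Ioo] with x hx using hLeq x hx
  have hR_ae : (fun s => (1 / Real.Gamma α) * ∫ x, F (x, s) ∂μ)
      =ᵐ[μ] fun s => u s * TIr b α lam v s := by
    filter_upwards [ae_restrict_mem measurableSet_Ioo] with s hs using hReq s hs
  refine ⟨hL_int.congr hL_ae, hR_int.congr hR_ae, ?_⟩
  have hswap : ∫ x, (∫ s, F (x, s) ∂μ) ∂μ = ∫ s, (∫ x, F (x, s) ∂μ) ∂μ :=
    integral_integral_swap (f := fun x s => F (x, s)) hF_int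
  calc ∫ x in Ioo a b, TIl a α lam u x * v x
      = ∫ x, (1 / Real.Gamma α) * ∫ s, F (x, s) ∂μ ∂μ := (integral_congr_ae hL_ae).symm
  _ = (1 / Real.Gamma α) * ∫ x, (∫ s, F (x, s) ∂μ) ∂μ := integral_const_mul _ _
  _ = (1 / Real.Gamma α) * ∫ s, (∫ x, F (x, s) ∂μ) ∂μ := by rw [hswap]
  _ = ∫ s, (1 / Real.Gamma α) * ∫ x, F (x, s) ∂μ ∂μ := (integral_const_mul _ _).symm
  _ = ∫ x in Ioo a b, u x * TIr b α lam v x := integral_congr_ae hR_ae
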